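/- Let 𝒜 be an invertible 4 × 4 complex matrix and let 𝒱 ⊆ ℂ² ⊗ ℂ² ⊗ ℂ² be the orthogonal complement of the span of the vectors (1,α) ⊗ 𝒜(1,α,α²,α³) over all α ∈ ℂ. For i < j, let A_{ij} denote the 2 × 4 submatrix of 𝒜 formed by its i-th and j-th rows (rows indexed 0,1,2,3). If 𝒱 is a genuinely entangled subspace, then none of the submatrices A_{01}, A_{23}, A_{02}, A_{13} has (as its ordered list of four columns) either of the following forms: (0⃗, b, c, −ξ²b + ξc) for some b, c ∈ ℂ² and ξ ∈ ℂ, or (a, b, (ξ₂ − ξ₁²)a + ξ₁b, −ξ₁ξ₂a + ξ₂b) for some a, b ∈ ℂ² and ξ₁, ξ₂ ∈ ℂ. -/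

import Mathlib

noncomputable section

abbrev TriH (d₁ d₂ d₃ : ℕ) := EuclideanSpace ℂ (Fin d₁ × Fin d₂ × Fin d₃)

def BiprodA {d₁ d₂ d₃ : ℕ} (ψ : TriH d₁ d₂ d₃) : Prop :=
  ∃ (a : Fin d₁ → ℂ) (g : Fin d₂ × Fin d₃ → ℂ), ∀ i j k, ψ (i, j, k) = a i * g (j, k)

def BiprodB {d₁ d₂ d₃ : ℕ} (ψ : TriH d₁ d₂ d₃) : Prop :=
  ∃ (b : Fin d₂ → ℂ) (g : Fin d₁ × Fin d₃ → ℂ), ∀ i j k, ψ (i, j, k) = b j * g (i, k)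

def BiprodC {d₁ d₂ d₃ : ℕ} (ψ : TriH d₁ d₂ d₃) : Prop :=
  ∃ (c : Fin d₃ → ℂ) (g : Fin d₁ × Fin d₂ → ℂ), ∀ i j k, ψ (i, j, k) = c k * g (i, j)

def IsGME3 {d₁ d₂ d₃ : ℕ} (ψ : TriH d₁ d₂ d₃) : Prop :=
  ψ ≠ 0 ∧ ¬ BiprodA ψ ∧ ¬ BiprodB ψ ∧ ¬ BiprodC ψ

def IsGES3 {d₁ d₂ d₃ : ℕ} (V : Submodule ℂ (TriH d₁ d₂ d₃)) : Prop :=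
  ∀ ψ ∈ V, ψ ≠ 0 → IsGME3 ψ

def idx4 (j k : Fin 2) : Fin 4 := ⟨2 * j.1 + k.1, by have := j.2; have := k.2; omega⟩

def curveA (A : Matrix (Fin 4) (Fin 4) ℂ) (α : ℂ) : TriH 2 2 2 :=
  WithLp.toLp 2 (fun p : Fin 2 × Fin 2 × Fin 2 => ![(1 : ℂ), α] p.1 * A.mulVec ![1, α, α ^ 2, α ^ 3] (idx4 p.2.1 p.2.2))

/-- The `t`-th column of the `2 × 4` submatrix `A_{ij}` of `𝒜` formed by rows `i` and `j`. -/
def col (A : Matrix (Fin 4) (Fin 4) ℂ) (i j : Fin 4) (t : Fin 4) : Fin 2 → ℂ :=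
  ![A i t, A j t]

/-- The forbidden form `(0⃗, b, c, −ξ²b + ξc)` of the columns of `A_{ij}`. -/
def BadForm1 (A : Matrix (Fin 4) (Fin 4) ℂ) (i j : Fin 4) : Prop :=
  ∃ (b c : Fin 2 → ℂ) (ξ : ℂ),
    col A i j 0 = 0 ∧ col A i j 1 = b ∧ col A i j 2 = c ∧
    col A i j 3 = (-(ξ ^ 2)) • b + ξ • c

/-- The forbidden form `(a, b, (ξ₂ − ξ₁²)a + ξ₁b, −ξ₁ξ₂a + ξ₂b)` of the columns of `A_{ij}`. -/
def BadForm2 (A : Matrix (Fin 4) (Fin 4) ℂ) (i j : Fin 4) : Prop :=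
  ∃ (a b : Fin 2 → ℂ) (ξ₁ ξ₂ : ℂ),
    col A i j 0 = a ∧ col A i j 1 = b ∧
    col A i j 2 = (ξ₂ - ξ₁ ^ 2) • a + ξ₁ • b ∧
    col A i j 3 = (-(ξ₁ * ξ₂)) • a + ξ₂ • b

lemma exists_g (v₀ v₁ v₂ : Fin 2 × Fin 2 → ℂ) :
    ∃ g : Fin 2 × Fin 2 → ℂ, g ≠ 0 ∧
      (∑ p, v₀ p * g p) = 0 ∧ (∑ p, v₁ p * g p) = 0 ∧ (∑ p, v₂ p * g p) = 0 := by
  set L : (Fin 2 × Fin 2 → ℂ) →ₗ[ℂ] (Fin 3 → ℂ) :=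
    { toFun := fun g m => ∑ p, ![v₀, v₁, v₂] m p * g p
      map_add' := by intro x y; funext m; simp [mul_add, Finset.sum_add_distrib]
      map_smul' := by intro c x; funext m; simp [Finset.mul_sum]; ring_nf; simp [mul_comm, mul_left_comm] } with hL
  have hker : LinearMap.ker L ≠ ⊥ := by
    intro h
    have hinj := LinearMap.ker_eq_bot.mp h
    have := LinearMap.finrank_le_finrank_of_injective hinj
    simp [Module.finrank_fintype_fun_eq_card] at this
  obtain ⟨g, hgmem, hgne⟩ := Submodule.exists_mem_ne_zero_of_ne_bot hker
  have hLg : L g = 0 := LinearMap.mem_ker.mp hgmem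
  refine ⟨g, hgne, ?_, ?_, ?_⟩
  · have := congrFun hLg 0; simpa [hL] using this
  · have := congrFun hLg 1; simpa [hL] using this
  · have := congrFun hLg 2; simpa [hL] using this


open ComplexConjugate in
lemma keyB (A : Matrix (Fin 4) (Fin 4) ℂ) (j₀ : Fin 2) (p₀ p₁ p₂ : ℂ) (u₀ u₁ : Fin 2 → ℂ)
    (h0 : ∀ s, A (idx4 j₀ s) 0 = p₀ * u₀ s)
    (h1 : ∀ s, A (idx4 j₀ s) 1 = p₀ * u₁ s + p₁ * u₀ s)
    (h2 : ∀ s, A (idx4 j₀ s) 2 = p₁ * u₁ s + p₂ * u₀ s)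
    (h3 : ∀ s, A (idx4 j₀ s) 3 = p₂ * u₁ s) :
    ¬ IsGES3 ((Submodule.span ℂ (Set.range (curveA A)))ᗮ) := by
  intro hGES
  obtain ⟨g, hgne, hg₀, hg₁, hg₂⟩ := exists_g
    (fun p => if p.1 = 0 then conj (u₀ p.2) else 0)
    (fun p => if p.1 = 0 then conj (u₁ p.2) else conj (u₀ p.2))
    (fun p => if p.1 = 0 then 0 else conj (u₁ p.2))
  simp only [Fintype.sum_prod_type, Fin.sum_univ_two] at hg₀ hg₁ hg₂
  norm_num at hg₀ hg₁ hg₂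
  set ψ : TriH 2 2 2 := WithLp.toLp 2 (fun p : Fin 2 × Fin 2 × Fin 2 => (if p.2.1 = j₀ then (1:ℂ) else 0) * g (p.1, p.2.2)) with hψ
  have hψne : ψ ≠ 0 := by
    intro h
    apply hgne
    funext p
    have := congrArg (fun v : TriH 2 2 2 => v (p.1, j₀, p.2)) h
    simpa [hψ] using this
  have hmem : ψ ∈ (Submodule.span ℂ (Set.range (curveA A)))ᗮ := by
    rw [Submodule.mem_orthogonal]
    intro u hu
    induction hu using Submodule.span_induction with
    | mem x hx =>
      obtain ⟨α, rfl⟩ := hx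
      rw [PiLp.inner_apply]
      simp only [RCLike.inner_apply]
      simp only [Fintype.sum_prod_type, Fin.sum_univ_two, curveA, Matrix.mulVec,
        dotProduct, Fin.sum_univ_four, PiLp.toLp_apply, Matrix.cons_val_zero, Matrix.cons_val_one,
        Matrix.head_cons, Matrix.cons_val_two, Matrix.cons_val_three, Matrix.tail_cons, hψ]
      fin_cases j₀ <;>
        simp only [Fin.zero_eta, Fin.mk_one] at h0 h1 h2 h3 ⊢ <;>
        · norm_num
          simp only [h0, h1, h2, h3]
          simp only [map_add, map_mul, map_pow, map_one]
          linear_combination (conj p₀ + conj p₁ * conj α + conj p₂ * conj α ^ 2) * hg₀ +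
            (conj p₀ + conj p₁ * conj α + conj p₂ * conj α ^ 2) * conj α * hg₁ +
            (conj p₀ + conj p₁ * conj α + conj p₂ * conj α ^ 2) * conj α ^ 2 * hg₂
    | zero => simp
    | add x y _ _ hx hy => rw [inner_add_left, hx, hy]; ring
    | smul c x _ hx => rw [inner_smul_left, hx]; ring
  have hGME := hGES ψ hmem hψne
  exact hGME.2.2.1 ⟨fun j => if j = j₀ then 1 else 0, fun p => g p, fun i j k => rfl⟩

open ComplexConjugate in
lemma keyC (A : Matrix (Fin 4) (Fin 4) ℂ) (k₀ : Fin 2) (p₀ p₁ p₂ : ℂ) (u₀ u₁ : Fin 2 → ℂ)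
    (h0 : ∀ s, A (idx4 s k₀) 0 = p₀ * u₀ s)
    (h1 : ∀ s, A (idx4 s k₀) 1 = p₀ * u₁ s + p₁ * u₀ s)
    (h2 : ∀ s, A (idx4 s k₀) 2 = p₁ * u₁ s + p₂ * u₀ s)
    (h3 : ∀ s, A (idx4 s k₀) 3 = p₂ * u₁ s) :
    ¬ IsGES3 ((Submodule.span ℂ (Set.range (curveA A)))ᗮ) := by
  intro hGES
  obtain ⟨g, hgne, hg₀, hg₁, hg₂⟩ := exists_g
    (fun p => if p.1 = 0 then conj (u₀ p.2) else 0)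
    (fun p => if p.1 = 0 then conj (u₁ p.2) else conj (u₀ p.2))
    (fun p => if p.1 = 0 then 0 else conj (u₁ p.2))
  simp only [Fintype.sum_prod_type, Fin.sum_univ_two] at hg₀ hg₁ hg₂
  norm_num at hg₀ hg₁ hg₂
  set ψ : TriH 2 2 2 := WithLp.toLp 2 (fun p : Fin 2 × Fin 2 × Fin 2 => (if p.2.2 = k₀ then (1:ℂ) else 0) * g (p.1, p.2.1)) with hψ
  have hψne : ψ ≠ 0 := by
    intro h
    apply hgne
    funext p
    have := congrArg (fun v : TriH 2 2 2 => v (p.1, p.2, k₀)) h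
    simpa [hψ] using this
  have hmem : ψ ∈ (Submodule.span ℂ (Set.range (curveA A)))ᗮ := by
    rw [Submodule.mem_orthogonal]
    intro u hu
    induction hu using Submodule.span_induction with
    | mem x hx =>
      obtain ⟨α, rfl⟩ := hx
      rw [PiLp.inner_apply]
      simp only [RCLike.inner_apply]
      simp only [Fintype.sum_prod_type, Fin.sum_univ_two, curveA, Matrix.mulVec,
        dotProduct, Fin.sum_univ_four, PiLp.toLp_apply, Matrix.cons_val_zero, Matrix.cons_val_one,
        Matrix.head_cons, Matrix.cons_val_two, Matrix.cons_val_three, Matrix.tail_cons, hψ]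
      fin_cases k₀ <;>
        simp only [Fin.zero_eta, Fin.mk_one] at h0 h1 h2 h3 ⊢ <;>
        · norm_num
          simp only [h0, h1, h2, h3]
          simp only [map_add, map_mul, map_pow, map_one]
          linear_combination (conj p₀ + conj p₁ * conj α + conj p₂ * conj α ^ 2) * hg₀ +
            (conj p₀ + conj p₁ * conj α + conj p₂ * conj α ^ 2) * conj α * hg₁ +
            (conj p₀ + conj p₁ * conj α + conj p₂ * conj α ^ 2) * conj α ^ 2 * hg₂
    | zero => simp
    | add x y _ _ hx hy => rw [inner_add_left, hx, hy]; ring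
    | smul c x _ hx => rw [inner_smul_left, hx]; ring
  have hGME := hGES ψ hmem hψne
  exact hGME.2.2.2 ⟨fun k => if k = k₀ then 1 else 0, fun p => g p, fun i j k => rfl⟩

lemma badform_data (A : Matrix (Fin 4) (Fin 4) ℂ) (i j : Fin 4)
    (h : BadForm1 A i j ∨ BadForm2 A i j) :
    ∃ (p₀ p₁ p₂ : ℂ) (u₀ u₁ : Fin 2 → ℂ),
      ∀ s : Fin 2, ![A i 0, A j 0] s = p₀ * u₀ s ∧
        ![A i 1, A j 1] s = p₀ * u₁ s + p₁ * u₀ s ∧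
        ![A i 2, A j 2] s = p₁ * u₁ s + p₂ * u₀ s ∧
        ![A i 3, A j 3] s = p₂ * u₁ s := by
  rcases h with ⟨b, c, ξ, e0, e1, e2, e3⟩ | ⟨a, b, ξ₁, ξ₂, e0, e1, e2, e3⟩
  · refine ⟨0, 1, ξ, b, fun s => c s - ξ * b s, fun s => ?_⟩
    have f0 := congrFun e0 s; have f1 := congrFun e1 s
    have f2 := congrFun e2 s; have f3 := congrFun e3 s
    simp [col] at f0 f1 f2 f3
    refine ⟨by rw [f0]; ring, by rw [f1]; ring, by rw [f2]; ring, by rw [f3]; ring⟩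
  · refine ⟨1, ξ₁, ξ₂, a, fun s => b s - ξ₁ * a s, fun s => ?_⟩
    have f0 := congrFun e0 s; have f1 := congrFun e1 s
    have f2 := congrFun e2 s; have f3 := congrFun e3 s
    simp [col] at f0 f1 f2 f3
    refine ⟨by rw [f0]; ring, by rw [f1]; ring, by rw [f2]; ring, by rw [f3]; ring⟩

/-- if `𝒱 = (span{(1,α) ⊗ 𝒜(1,α,α²,α³)})^⊥` is a GES, then none of the
row-pair submatrices `A₀₁, A₂₃, A₀₂, A₁₃` of `𝒜` has either forbidden form. -/
theorem necessary_condition_on_A (A : Matrix (Fin 4) (Fin 4) ℂ)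
    (hA : IsUnit A.det)
    (hGES : IsGES3 ((Submodule.span ℂ (Set.range (curveA A)))ᗮ)) :
    (¬ BadForm1 A 0 1 ∧ ¬ BadForm2 A 0 1) ∧
    (¬ BadForm1 A 2 3 ∧ ¬ BadForm2 A 2 3) ∧
    (¬ BadForm1 A 0 2 ∧ ¬ BadForm2 A 0 2) ∧
    (¬ BadForm1 A 1 3 ∧ ¬ BadForm2 A 1 3) := by
  
  have key : ∀ (i j : Fin 4) (r : Fin 2 → Fin 4), (∀ s : Fin 2, r s = ![i, j] s) →
      ((∃ j₀ : Fin 2, ∀ s, idx4 j₀ s = r s) ∨ (∃ k₀ : Fin 2, ∀ s, idx4 s k₀ = r s)) →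
      ¬ (BadForm1 A i j ∨ BadForm2 A i j) := by
    intro i j r hr hor h
    obtain ⟨p₀, p₁, p₂, u₀, u₁, hd⟩ := badform_data A i j h
    rcases hor with ⟨j₀, hj⟩ | ⟨k₀, hk⟩
    · exact keyB A j₀ p₀ p₁ p₂ u₀ u₁
        (fun s => by rw [hj s, hr s]; fin_cases s <;> [simpa using (hd 0).1; simpa using (hd 1).1])
        (fun s => by rw [hj s, hr s]; fin_cases s <;> [simpa using (hd 0).2.1; simpa using (hd 1).2.1])
        (fun s => by rw [hj s, hr s]; fin_cases s <;> [simpa using (hd 0).2.2.1; simpa using (hd 1).2.2.1])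
        (fun s => by rw [hj s, hr s]; fin_cases s <;> [simpa using (hd 0).2.2.2; simpa using (hd 1).2.2.2]) hGES
    · exact keyC A k₀ p₀ p₁ p₂ u₀ u₁
        (fun s => by rw [hk s, hr s]; fin_cases s <;> [simpa using (hd 0).1; simpa using (hd 1).1])
        (fun s => by rw [hk s, hr s]; fin_cases s <;> [simpa using (hd 0).2.1; simpa using (hd 1).2.1])
        (fun s => by rw [hk s, hr s]; fin_cases s <;> [simpa using (hd 0).2.2.1; simpa using (hd 1).2.2.1])
        (fun s => by rw [hk s, hr s]; fin_cases s <;> [simpa using (hd 0).2.2.2; simpa using (hd 1).2.2.2]) hGES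
  have k01 := key 0 1 (fun s => idx4 0 s) (by decide) (Or.inl ⟨0, fun s => rfl⟩)
  have k23 := key 2 3 (fun s => idx4 1 s) (by decide) (Or.inl ⟨1, fun s => rfl⟩)
  have k02 := key 0 2 (fun s => idx4 s 0) (by decide) (Or.inr ⟨0, fun s => rfl⟩)
  have k13 := key 1 3 (fun s => idx4 s 1) (by decide) (Or.inr ⟨1, fun s => rfl⟩)
  exact ⟨⟨fun h => k01 (Or.inl h), fun h => k01 (Or.inr h)⟩,
    ⟨fun h => k23 (Or.inl h), fun h => k23 (Or.inr h)⟩,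
    ⟨fun h => k02 (Or.inl h), fun h => k02 (Or.inr h)⟩,
    ⟨fun h => k13 (Or.inl h), fun h => k13 (Or.inr h)⟩⟩
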